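/- Let ℓ, t, and r be positive integers, let c = (c_1, …, c_t) be a non-decreasing vector of positive integers with c_i ≥ i for all 1 ≤ i ≤ t, and let v be the non-decreasing rearrangement of the multiset {a·c_i : 1 ≤ a ≤ ℓ, 1 ≤ i ≤ t} (counted with multiplicity), a vector of length ℓt. If ℓ = 2r−1 then S(v) ≤ (r−1)(t−1), and if ℓ = 2r then S(v) ≤ r(t−1). -/

import Mathlib

/-- For an integer vector `v = (v_1, …, v_m)` (as a list),
`S(v) = max(0, 1 − v_1, 2 − v_2, …, m − v_m)`. -/
def S (v : List ℤ) : ℤ :=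
  (((List.range v.length)).map (fun i => (((i : ℕ) + 1 : ℕ) : ℤ) - v.getD i 0)).foldr max 0

lemma window_sum (s : ℕ) : ∀ x : ℕ, (∑ a ∈ Finset.Ioc s (2*s+1), x / a) ≤ x - s := by
  intro x
  induction x using Nat.strong_induction_on with
  | _ x ih =>
    by_cases hx : x ≤ 2*s
    · calc (∑ a ∈ Finset.Ioc s (2*s+1), x / a)
          ≤ ∑ a ∈ Finset.Ioc s (2*s+1), (if a ≤ x then 1 else 0) := by
            apply Finset.sum_le_sum
            intro a ha
            simp only [Finset.mem_Ioc] at ha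
            by_cases h : a ≤ x
            · rw [if_pos h]
              have h2 : x / a < 2 := (Nat.div_lt_iff_lt_mul (show 0 < a by omega)).2 (by omega)
              omega
            · rw [if_neg h, Nat.div_eq_of_lt (by omega)]
        _ = ((Finset.Ioc s (2*s+1)).filter (fun a => a ≤ x)).card :=
            (Finset.card_filter _ _).symm
        _ ≤ (Finset.Ioc s x).card := by
            apply Finset.card_le_card
            intro a ha
            simp only [Finset.mem_filter, Finset.mem_Ioc] at *
            omega
        _ ≤ x - s := by rw [Nat.card_Ioc]
    · have hcard : (Finset.Ioc s (2*s+1)).card = s + 1 := by rw [Nat.card_Ioc]; omega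
      calc (∑ a ∈ Finset.Ioc s (2*s+1), x / a)
          ≤ ∑ a ∈ Finset.Ioc s (2*s+1), ((x - (s+1)) / a + 1) := by
            apply Finset.sum_le_sum
            intro a ha
            simp only [Finset.mem_Ioc] at ha
            rw [Nat.div_eq_sub_div (by omega) (by omega)]
            have : x - a ≤ x - (s+1) := by omega
            exact Nat.add_le_add_right (Nat.div_le_div_right this) 1
        _ = (∑ a ∈ Finset.Ioc s (2*s+1), (x - (s+1)) / a) + (s+1) := by
            rw [Finset.sum_add_distrib, Finset.sum_const, hcard, smul_eq_mul, mul_one]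
        _ ≤ ((x - (s+1)) - s) + (s+1) := by
            exact Nat.add_le_add_right (ih (x - (s+1)) (by omega)) _
        _ ≤ x - s := by omega

-- card of filter as min
lemma filter_card (n x m : ℕ) (hm : 0 < m) :
    (∑ a ∈ Finset.Icc 1 n, if a * m ≤ x then 1 else 0) = min n (x / m) := by
  have h : (Finset.Icc 1 n).filter (fun a => a * m ≤ x) = Finset.Icc 1 (min n (x/m)) := by
    ext a
    simp only [Finset.mem_filter, Finset.mem_Icc, le_min_iff]
    constructor
    · rintro ⟨⟨h1, h2⟩, h3⟩
      exact ⟨h1, h2, (Nat.le_div_iff_mul_le hm).2 h3⟩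
    · rintro ⟨h1, h2, h3⟩
      exact ⟨⟨h1, h2⟩, (Nat.le_div_iff_mul_le hm).1 h3⟩
  rw [← Finset.card_filter, h, Nat.card_Icc, Nat.add_sub_cancel]

-- main counting inequality, odd case  ℓ = 2r-1
lemma main_odd (r t : ℕ) (hr : 0 < r) (ht : 0 < t) (x : ℕ) :
    (∑ a ∈ Finset.Icc 1 (2*r-1), min t (x / a)) ≤ x + (r-1)*(t-1) := by
  set s := min (2*r-1) (x/t) with hs
  have hchoice := min_choice (2*r-1) (x/t)
  have hsle : s ≤ 2*r-1 := min_le_left _ _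
  have hsx : s ≤ x / t := min_le_right _ _
  have hst : s * t ≤ x :=
    le_trans (Nat.mul_le_mul_right t hsx) (Nat.div_mul_le_self x t)
  -- low terms are t
  have hlow : ∀ a ∈ Finset.Ioc 0 s, min t (x / a) = t := by
    intro a ha
    simp only [Finset.mem_Ioc] at ha
    have h1 : a ≤ x / t := le_trans ha.2 hsx
    have h2 : t ≤ x / a := by
      rw [Nat.le_div_iff_mul_le ha.1, mul_comm]
      exact (Nat.le_div_iff_mul_le ht).1 h1
    exact min_eq_left h2
  -- high terms: a > s and a ≤ 2r-1 implies x/a ≤ t-1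
  have hhigh : ∀ a, s < a → a ≤ 2*r-1 → x / a ≤ t - 1 := by
    intro a h1 h2
    have hxa : x / t < a := by omega
    have hlt : x < a * t := by
      by_contra hcon
      push_neg at hcon
      exact absurd ((Nat.le_div_iff_mul_le ht).2 hcon) (by omega)
    have : x / a < t := Nat.div_lt_of_lt_mul hlt
    omega
  have hIcc : Finset.Icc 1 (2*r-1) = Finset.Ioc 0 (2*r-1) := by
    ext a; simp [Finset.mem_Icc, Finset.mem_Ioc]; omega
  rw [hIcc]
  rcases le_or_gt r s with hcase | hcase
  · -- Case I : s ≥ r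
    rw [← Finset.sum_Ioc_consecutive _ (Nat.zero_le s) hsle]
    have h1 : (∑ a ∈ Finset.Ioc 0 s, min t (x / a)) = s * t := by
      rw [Finset.sum_congr rfl hlow, Finset.sum_const, Nat.card_Ioc, Nat.sub_zero, smul_eq_mul]
    have h2 : (∑ a ∈ Finset.Ioc s (2*r-1), min t (x / a)) ≤ (2*r-1-s) * (t-1) := by
      calc (∑ a ∈ Finset.Ioc s (2*r-1), min t (x / a))
          ≤ ∑ _a ∈ Finset.Ioc s (2*r-1), (t-1) := by
            apply Finset.sum_le_sum
            intro a ha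
            simp only [Finset.mem_Ioc] at ha
            exact le_trans (min_le_right _ _) (hhigh a ha.1 ha.2)
        _ = (2*r-1-s) * (t-1) := by
            rw [Finset.sum_const, Nat.card_Ioc, smul_eq_mul]
    have h3 : (2*r-1-s) * (t-1) ≤ (r-1) * (t-1) :=
      Nat.mul_le_mul_right _ (by omega)
    omega
  · -- Case II : s < r, so s = x/t
    have hseq : s = x / t := by omega
    have hx1 : x < (s+1) * t := by
      have h0 := Nat.div_add_mod x t
      have h1 : x % t < t := Nat.mod_lt _ ht
      calc x = t * (x/t) + x % t := h0.symm
        _ < t * (x/t) + t := by omega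
        _ = (x/t + 1) * t := by ring
        _ = (s+1)*t := by rw [hseq]
    have hxs1 : x / (s+1) ≤ t - 1 := by
      have h3 : x / (s+1) < t := Nat.div_lt_of_lt_mul hx1
      omega
    have hhalf : x / (2*s+2) ≤ (t-1)/2 := by
      have h1 : x / (2*s+2) = x / (s+1) / 2 := by
        rw [Nat.div_div_eq_div_mul, show (s+1)*2 = 2*s+2 by ring]
      rw [h1]
      exact Nat.div_le_div_right hxs1
    have hb1 : s ≤ 2*s+1 := by omega
    have hb2 : 2*s+1 ≤ 2*r-1 := by omega
    rw [← Finset.sum_Ioc_consecutive _ (Nat.zero_le s) (le_trans hb1 hb2),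
        ← Finset.sum_Ioc_consecutive _ hb1 hb2]
    have h1 : (∑ a ∈ Finset.Ioc 0 s, min t (x / a)) = s * t := by
      rw [Finset.sum_congr rfl hlow, Finset.sum_const, Nat.card_Ioc, Nat.sub_zero, smul_eq_mul]
    have h2 : (∑ a ∈ Finset.Ioc s (2*s+1), min t (x / a)) ≤ x - s := by
      refine le_trans (Finset.sum_le_sum fun a _ => min_le_right t (x/a)) ?_
      exact window_sum s x
    have h3 : (∑ a ∈ Finset.Ioc (2*s+1) (2*r-1), min t (x / a)) ≤ (r-1-s) * (t-1) := by
      calc (∑ a ∈ Finset.Ioc (2*s+1) (2*r-1), min t (x / a))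
          ≤ ∑ _a ∈ Finset.Ioc (2*s+1) (2*r-1), (t-1)/2 := by
            apply Finset.sum_le_sum
            intro a ha
            simp only [Finset.mem_Ioc] at ha
            refine le_trans (min_le_right _ _) (le_trans ?_ hhalf)
            exact Nat.div_le_div_left (by omega) (by omega)
        _ = (2*r-1-(2*s+1)) * ((t-1)/2) := by
            rw [Finset.sum_const, Nat.card_Ioc, smul_eq_mul]
        _ ≤ (r-1-s) * (2 * ((t-1)/2)) := by
            rw [← mul_assoc]
            exact Nat.mul_le_mul_right _ (by omega)
        _ ≤ (r-1-s) * (t-1) := Nat.mul_le_mul_left _ (by omega)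
    -- combine: s*t + (x - s) + (r-1-s)*(t-1) ≤ x + (r-1)*(t-1)
    have hst2 : s ≤ s * t := Nat.le_mul_of_pos_right s ht
    have hsx' : s ≤ x := le_trans hst2 hst
    have key : s * t + (x - s) + (r-1-s) * (t-1) ≤ x + (r-1)*(t-1) := by
      have e1 : s * t + (x - s) = x + s * (t-1) := by
        have : s * (t-1) = s * t - s := by
          rw [Nat.mul_sub, mul_one]
        omega
      rw [e1, add_assoc]
      have e2 : s * (t-1) + (r-1-s) * (t-1) = (r-1) * (t-1) := by
        rw [← Nat.add_mul]
        congr 1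
        omega
      rw [e2]
    omega

-- even case ℓ = 2r
lemma main_even (r t : ℕ) (hr : 0 < r) (ht : 0 < t) (x : ℕ) :
    (∑ a ∈ Finset.Icc 1 (2*r), min t (x / a)) ≤ x + r*(t-1) := by
  have h := main_odd (r+1) t (by omega) ht x
  have hsub : Finset.Icc 1 (2*r) ⊆ Finset.Icc 1 (2*(r+1)-1) := by
    apply Finset.Icc_subset_Icc_right; omega
  have h2 : (∑ a ∈ Finset.Icc 1 (2*r), min t (x / a))
      ≤ ∑ a ∈ Finset.Icc 1 (2*(r+1)-1), min t (x / a) :=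
    Finset.sum_le_sum_of_subset hsub
  rw [show r+1-1 = r by omega] at h
  omega

-- swap lemma
lemma swap_sum (n t x : ℕ) :
    (∑ i ∈ Finset.Icc 1 t, min n (x / i)) = ∑ a ∈ Finset.Icc 1 n, min t (x / a) := by
  have key : ∀ (m k : ℕ), 0 < k →
      (∑ a ∈ Finset.Icc 1 m, if a * k ≤ x then 1 else 0) = min m (x / k) :=
    fun m k hk => filter_card m x k hk
  calc (∑ i ∈ Finset.Icc 1 t, min n (x / i))
      = ∑ i ∈ Finset.Icc 1 t, ∑ a ∈ Finset.Icc 1 n, (if a * i ≤ x then 1 else 0) := by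
        refine Finset.sum_congr rfl fun i hi => ?_
        simp only [Finset.mem_Icc] at hi
        exact (key n i (by omega)).symm
    _ = ∑ a ∈ Finset.Icc 1 n, ∑ i ∈ Finset.Icc 1 t, (if a * i ≤ x then 1 else 0) :=
        Finset.sum_comm
    _ = ∑ a ∈ Finset.Icc 1 n, min t (x / a) := by
        refine Finset.sum_congr rfl fun a ha => ?_
        simp only [Finset.mem_Icc] at ha
        rw [← key t a (by omega)]
        refine Finset.sum_congr rfl fun i _ => ?_
        rw [mul_comm]
lemma foldr_max_le (l : List ℤ) (B : ℤ) (hB : 0 ≤ B) (h : ∀ z ∈ l, z ≤ B) :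
    l.foldr max 0 ≤ B := by
  induction l with
  | nil => simpa using hB
  | cons a l ih =>
    simp only [List.foldr_cons]
    exact max_le (h a (by simp)) (ih fun z hz => h z (List.mem_cons_of_mem _ hz))

lemma sorted_count (v : List ℤ) (hs : v.Pairwise (· ≤ ·)) (i : ℕ) (hi : i < v.length) :
    i + 1 ≤ v.countP (fun z => decide (z ≤ v[i])) := by
  have htake : ∀ z ∈ v.take (i+1), z ≤ v[i] := by
    intro z hz
    rw [List.mem_take_iff_getElem] at hz
    obtain ⟨j, hj, rfl⟩ := hz
    have hj' : j < v.length := by omega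
    rcases Nat.lt_or_ge j i with h | h
    · exact List.pairwise_iff_getElem.mp hs j i hj' hi h
    · have : j = i := by omega
      subst this; rfl
  have hlen : (v.take (i+1)).length = i + 1 := by
    rw [List.length_take]; omega
  have hcnt : (v.take (i+1)).countP (fun z => decide (z ≤ v[i])) = i + 1 := by
    rw [List.countP_eq_length.2 (fun a ha => by simpa using htake a ha), hlen]
  calc i + 1 = (v.take (i+1)).countP (fun z => decide (z ≤ v[i])) := hcnt.symm
    _ ≤ v.countP (fun z => decide (z ≤ v[i])) :=
        (List.take_sublist _ _).countP_le
lemma countP_sort (M : Multiset ℤ) (y : ℤ) :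
    (M.sort (· ≤ ·)).countP (fun z => decide (z ≤ y)) = Multiset.countP (fun z => z ≤ y) M := by
  conv_rhs => rw [← Multiset.sort_eq M (· ≤ ·)]
  rw [Multiset.coe_countP]

lemma count_bound (ℓ t : ℕ) (c : Fin t → ℕ) (hcpos : ∀ i, 0 < c i)
    (hci : ∀ i : Fin t, (i : ℕ) + 1 ≤ c i) (q : ℕ)
    (H : ∀ y : ℕ, (∑ i ∈ Finset.Icc 1 t, min ℓ (y / i)) ≤ y + q)
    (y : ℤ) (hy : 0 ≤ y) :
    Multiset.countP (fun z => z ≤ y)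
      ((Finset.Icc 1 ℓ ×ˢ (Finset.univ : Finset (Fin t))).val.map
        (fun p => ((p.1 * c p.2 : ℕ) : ℤ))) ≤ y.toNat + q := by
  have hyn : ((y.toNat : ℤ)) = y := Int.toNat_of_nonneg hy
  set n := y.toNat with hn
  rw [Multiset.countP_map]
  have hfil : (Multiset.filter (fun p : ℕ × Fin t => ((p.1 * c p.2 : ℕ):ℤ) ≤ y)
        (Finset.Icc 1 ℓ ×ˢ (Finset.univ : Finset (Fin t))).val)
      = (Finset.filter (fun p : ℕ × Fin t => p.1 * c p.2 ≤ n)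
        (Finset.Icc 1 ℓ ×ˢ (Finset.univ : Finset (Fin t)))).val := by
    rw [Finset.filter_val]
    apply Multiset.filter_congr
    intro p _
    rw [← hyn]
    exact Int.ofNat_le
  rw [hfil]
  have hcard : (Finset.filter (fun p : ℕ × Fin t => p.1 * c p.2 ≤ n)
        (Finset.Icc 1 ℓ ×ˢ (Finset.univ : Finset (Fin t)))).card
      = ∑ i : Fin t, ∑ a ∈ Finset.Icc 1 ℓ, if a * c i ≤ n then 1 else 0 := by
    rw [Finset.card_filter, Finset.sum_product]
    exact Finset.sum_comm
  rw [← Finset.card_def, hcard]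
  have h1 : (∑ i : Fin t, ∑ a ∈ Finset.Icc 1 ℓ, if a * c i ≤ n then 1 else 0)
      = ∑ i : Fin t, min ℓ (n / c i) :=
    Finset.sum_congr rfl fun i _ => filter_card ℓ n (c i) (hcpos i)
  rw [h1]
  have h2 : (∑ i : Fin t, min ℓ (n / c i)) ≤ ∑ i : Fin t, min ℓ (n / ((i:ℕ)+1)) :=
    Finset.sum_le_sum fun i _ =>
      min_le_min (le_refl ℓ) (Nat.div_le_div_left (hci i) (Nat.succ_pos _))
  have h3 : (∑ i : Fin t, min ℓ (n / ((i:ℕ)+1))) = ∑ j ∈ Finset.Icc 1 t, min ℓ (n / j) := by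
    rw [Fin.sum_univ_eq_sum_range (fun i => min ℓ (n / (i+1))), ← Finset.Ico_add_one_right_eq_Icc,
      Finset.sum_Ico_eq_sum_range, show t + 1 - 1 = t from rfl]
    exact Finset.sum_congr rfl fun i _ => by rw [Nat.add_comm]
  calc (∑ i : Fin t, min ℓ (n / c i)) ≤ ∑ j ∈ Finset.Icc 1 t, min ℓ (n / j) := h3 ▸ h2
    _ ≤ n + q := H n

lemma main_general (ℓ t : ℕ) (c : Fin t → ℕ) (hcpos : ∀ i, 0 < c i)
    (hci : ∀ i : Fin t, (i : ℕ) + 1 ≤ c i) (q : ℕ)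
    (H : ∀ y : ℕ, (∑ i ∈ Finset.Icc 1 t, min ℓ (y / i)) ≤ y + q) :
    S (((Finset.Icc 1 ℓ ×ˢ (Finset.univ : Finset (Fin t))).val.map
        (fun p => ((p.1 * c p.2 : ℕ) : ℤ))).sort (· ≤ ·)) ≤ (q : ℤ) := by
  unfold S
  apply foldr_max_le _ _ (Int.ofNat_nonneg q)
  intro z hz
  simp only [List.mem_map, List.mem_range] at hz
  obtain ⟨i, hi, rfl⟩ := hz
  set M : Multiset ℤ := (Finset.Icc 1 ℓ ×ˢ (Finset.univ : Finset (Fin t))).val.map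
      (fun p => ((p.1 * c p.2 : ℕ) : ℤ)) with hM
  set v : List ℤ := M.sort (· ≤ ·) with hv
  rw [List.getD_eq_getElem v 0 hi]
  have hy1 : (1:ℤ) ≤ v[i] := by
    have hymem : v[i] ∈ M := by
      rw [← Multiset.mem_sort (α := ℤ) (· ≤ ·)]
      exact List.getElem_mem hi
    obtain ⟨p, hp, hpe⟩ := Multiset.mem_map.mp hymem
    have hp' : p ∈ Finset.Icc 1 ℓ ×ˢ (Finset.univ : Finset (Fin t)) := hp
    rw [Finset.mem_product, Finset.mem_Icc] at hp'
    have hpos : 0 < p.1 * c p.2 := Nat.mul_pos (by omega) (hcpos p.2)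
    rw [← hpe]
    exact_mod_cast hpos
  have hcount : (i+1 : ℕ) ≤ v.countP (fun z => decide (z ≤ v[i])) :=
    sorted_count v (Multiset.pairwise_sort _ _) i hi
  have hbound : v.countP (fun z => decide (z ≤ v[i])) ≤ (v[i]).toNat + q := by
    have h := count_bound ℓ t c hcpos hci q H v[i] (by linarith)
    have e := countP_sort M v[i]
    rw [← hv] at e
    exact le_trans (le_of_eq e) h
  have htn : (((v[i]).toNat : ℤ)) = v[i] := Int.toNat_of_nonneg (by linarith)
  have : (i+1 : ℕ) ≤ (v[i]).toNat + q := le_trans hcount hbound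
  have hcast : ((i:ℤ)+1) ≤ v[i] + q := by
    rw [← htn]
    exact_mod_cast this
  push_cast
  linarith

theorem stmt13 (ℓ t r : ℕ) (hℓ : 0 < ℓ) (ht : 0 < t) (hr : 0 < r)
    (c : Fin t → ℕ) (hcpos : ∀ i, 0 < c i) (hmono : Monotone c)
    (hci : ∀ i : Fin t, (i : ℕ) + 1 ≤ c i) :
    (ℓ = 2 * r - 1 →
      S (((Finset.Icc 1 ℓ ×ˢ (Finset.univ : Finset (Fin t))).val.map
          (fun p => ((p.1 * c p.2 : ℕ) : ℤ))).sort (· ≤ ·)) ≤ ((r : ℤ) - 1) * ((t : ℤ) - 1)) ∧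
    (ℓ = 2 * r →
      S (((Finset.Icc 1 ℓ ×ˢ (Finset.univ : Finset (Fin t))).val.map
          (fun p => ((p.1 * c p.2 : ℕ) : ℤ))).sort (· ≤ ·)) ≤ (r : ℤ) * ((t : ℤ) - 1)) := by
  constructor
  · intro hodd
    subst hodd
    have H : ∀ y : ℕ, (∑ i ∈ Finset.Icc 1 t, min (2*r-1) (y / i)) ≤ y + (r-1)*(t-1) := by
      intro y
      rw [swap_sum]
      exact main_odd r t hr ht y
    have h := main_general (2*r-1) t c hcpos hci ((r-1)*(t-1)) H
    refine le_trans h (le_of_eq ?_)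
    push_cast [Nat.cast_sub hr, Nat.cast_sub ht]
    ring
  · intro heven
    subst heven
    have H : ∀ y : ℕ, (∑ i ∈ Finset.Icc 1 t, min (2*r) (y / i)) ≤ y + r*(t-1) := by
      intro y
      rw [swap_sum]
      exact main_even r t hr ht y
    have h := main_general (2*r) t c hcpos hci (r*(t-1)) H
    refine le_trans h (le_of_eq ?_)
    push_cast [Nat.cast_sub ht]
    ring
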